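/- Let x, x' ∈ R^n with ‖x‖ ≤ 2, ‖x'‖ ≤ 2, let b be larger than a certain absolute constant, and let φ be the threshold function. Let g₁,…,g_m ~ N(0,I_n) be independent, define Φ(x) = (φ(⟨g_i,x⟩ − b))_{i=1}^m, and set p = E[φ(⟨g,x⟩−b) φ(⟨g,x'⟩−b)]. Then for every N ≥ 2, with probability at least 1 − 2mN^{−5}: |⟨Φ(x),Φ(x')⟩ − mp| ≤ C(√(mp) log N + log² N) for an absolute constant C. -/

import Mathlib

open MeasureTheory ProbabilityTheory Real

lemma exp_quad {x : ℝ} (hx : |x| ≤ 1) : Real.exp x ≤ 1 + x + x ^ 2 := by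
  have h := Real.exp_bound hx (by norm_num : 0 < 2)
  have h2 : ∑ i ∈ Finset.range 2, x ^ i / (Nat.factorial i : ℝ) = 1 + x := by
    simp [Finset.sum_range_succ]
  rw [h2] at h
  have habs : Real.exp x - (1 + x) ≤ |x| ^ 2 * (((2:ℕ).succ : ℝ) / ((2:ℕ).factorial * 2)) :=
    le_trans (le_abs_self _) h
  have h3 : |x| ^ 2 * (((2:ℕ).succ : ℝ) / ((2:ℕ).factorial * 2)) ≤ x ^ 2 := by
    rw [sq_abs]
    have : (((2:ℕ).succ : ℝ) / ((2:ℕ).factorial * 2)) = 3/4 := by norm_num [Nat.factorial]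
    rw [this]; nlinarith [sq_nonneg x]
  linarith

lemma pi_map_eval {m : ℕ} {α : Type*} [MeasurableSpace α] (ν : Measure α)
    [IsProbabilityMeasure ν] (i : Fin m) :
    (Measure.pi fun _ : Fin m => ν).map (fun g : Fin m → α => g i) = ν := by
  classical
  ext A hA
  rw [Measure.map_apply (measurable_pi_apply i) hA]
  have : (fun g : Fin m → α => g i) ⁻¹' A
      = Set.pi Set.univ (Function.update (fun _ => Set.univ) i A) := Set.eval_preimage
  rw [this, Measure.pi_pi, Finset.prod_eq_single i]
  · simp
  · intro j _ hj; simp [Function.update_of_ne hj]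
  · simp

lemma iIndep_eval (m : ℕ) {α : Type*} [MeasurableSpace α] (ν : Measure α)
    [IsProbabilityMeasure ν] :
    iIndepFun (fun i (G : Fin m → α) => G i)
      (Measure.pi fun _ : Fin m => ν) := by
  classical
  rw [iIndepFun_iff_measure_inter_preimage_eq_mul]
  intro S sets hsets
  have hL : (⋂ i ∈ S, (fun G : Fin m → α => G i) ⁻¹' sets i)
      = Set.pi Set.univ (fun i => if i ∈ S then sets i else Set.univ) := by
    ext x
    simp only [Set.mem_iInter, Set.mem_preimage, Set.mem_pi, Set.mem_univ, true_implies]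
    constructor
    · intro h i
      split
      · exact h i ‹_›
      · trivial
    · intro h i hi
      have := h i; rwa [if_pos hi] at this
  rw [hL, Measure.pi_pi]
  have hR : ∀ i ∈ S, (Measure.pi fun _ : Fin m => ν) ((fun G : Fin m → α => G i) ⁻¹' sets i)
      = ν (sets i) := by
    intro i hi
    rw [← Measure.map_apply (measurable_pi_apply i) (hsets i hi), pi_map_eval]
  rw [Finset.prod_congr rfl hR]
  calc ∏ i : Fin m, ν (if i ∈ S then sets i else Set.univ)
      = ∏ i : Fin m, (if i ∈ S then ν (sets i) else 1) := by
        refine Finset.prod_congr rfl fun i _ => ?_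
        split <;> simp
    _ = ∏ i ∈ S, ν (sets i) := by rw [Finset.prod_ite_mem, Finset.univ_inter]

lemma bernoulli_tails {m : ℕ} {Ω : Type*} [MeasurableSpace Ω] {μ : Measure Ω}
    [IsProbabilityMeasure μ] {X : Fin m → Ω → ℝ} {p : ℝ}
    (hind : iIndepFun X μ)
    (hmeas : ∀ i, Measurable (X i))
    (h01 : ∀ i ω, X i ω = 0 ∨ X i ω = 1)
    (hmean : ∀ i, ∫ ω, X i ω ∂μ = p)
    (hp0 : 0 ≤ p) (hp1 : p ≤ 1)
    {t₀ lam : ℝ} (hl0 : 0 < lam) (hl1 : lam ≤ 1) :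
    (μ {ω | ↑m * p + t₀ ≤ ∑ i, X i ω}).toReal
      + (μ {ω | ∑ i, X i ω ≤ ↑m * p - t₀}).toReal
      ≤ 2 * Real.exp (↑m * p * lam ^ 2 - lam * t₀) := by
  have hmp0 : (0:ℝ) ≤ ↑m * p := mul_nonneg (Nat.cast_nonneg m) hp0
  -- integrability of exp (u * X i)
  have hXb : ∀ i ω, 0 ≤ X i ω ∧ X i ω ≤ 1 := by
    intro i ω; rcases h01 i ω with h | h <;> rw [h] <;> norm_num
  have hXint : ∀ i, Integrable (X i) μ := by
    intro i
    refine (integrable_const (1:ℝ)).mono' (hmeas i).aestronglyMeasurable ?_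
    filter_upwards with ω
    rw [Real.norm_eq_abs, abs_of_nonneg (hXb i ω).1]
    exact (hXb i ω).2
  have hXexpint : ∀ (u : ℝ) i, Integrable (fun ω => Real.exp (u * X i ω)) μ := by
    intro u i
    refine (integrable_const (Real.exp |u|)).mono'
      (((hmeas i).const_mul u).exp).aestronglyMeasurable ?_
    filter_upwards with ω
    rw [Real.norm_eq_abs, abs_of_nonneg (Real.exp_pos _).le, Real.exp_le_exp]
    calc u * X i ω ≤ |u * X i ω| := le_abs_self _
      _ = |u| * |X i ω| := abs_mul _ _
      _ ≤ |u| * 1 := by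
          refine mul_le_mul_of_nonneg_left ?_ (abs_nonneg u)
          rw [abs_of_nonneg (hXb i ω).1]; exact (hXb i ω).2
      _ = |u| := mul_one _
  -- mgf of each X i
  have hmgf_i : ∀ (u : ℝ) i, mgf (X i) μ u = 1 + (Real.exp u - 1) * p := by
    intro u i
    have hpt : (fun ω => Real.exp (u * X i ω))
        = fun ω => 1 + (Real.exp u - 1) * X i ω := by
      funext ω
      rcases h01 i ω with h | h <;> rw [h] <;> simp <;> ring
    rw [mgf, hpt, integral_add (integrable_const _) ((hXint i).const_mul _),
      integral_const, integral_const_mul, hmean i]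
    simp
  -- mgf of the sum
  have hsum_eq : (fun ω => ∑ i, X i ω) = ∑ i, X i := by
    funext ω; simp
  have hmgf_sum : ∀ (u : ℝ), mgf (fun ω => ∑ i, X i ω) μ u
      ≤ Real.exp (↑m * p * (Real.exp u - 1)) := by
    intro u
    rw [hsum_eq, hind.mgf_sum hmeas Finset.univ]
    have h1 : ∀ i : Fin m, mgf (X i) μ u = 1 + (Real.exp u - 1) * p := hmgf_i u
    rw [Finset.prod_congr rfl fun i _ => h1 i, Finset.prod_const, Finset.card_univ,
      Fintype.card_fin]
    have hnn : (0:ℝ) ≤ 1 + (Real.exp u - 1) * p := by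
      nlinarith [Real.exp_pos u, mul_nonneg (Real.exp_pos u).le hp0]
    have hle : 1 + (Real.exp u - 1) * p ≤ Real.exp ((Real.exp u - 1) * p) := by
      have := Real.add_one_le_exp ((Real.exp u - 1) * p)
      linarith
    calc (1 + (Real.exp u - 1) * p) ^ m ≤ Real.exp ((Real.exp u - 1) * p) ^ m :=
          pow_le_pow_left₀ hnn hle m
      _ = Real.exp (↑m * ((Real.exp u - 1) * p)) := (Real.exp_nat_mul _ m).symm
      _ = Real.exp (↑m * p * (Real.exp u - 1)) := by ring_nf
  have hSint : ∀ (u : ℝ), Integrable (fun ω => Real.exp (u * ∑ i, X i ω)) μ := by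
    intro u
    have hMeasS : Measurable fun ω => ∑ i, X i ω :=
      Finset.measurable_sum Finset.univ fun i _ => hmeas i
    refine (integrable_const (Real.exp (|u| * m))).mono'
      ((hMeasS.const_mul u).exp).aestronglyMeasurable ?_
    filter_upwards with ω
    rw [Real.norm_eq_abs, abs_of_nonneg (Real.exp_pos _).le, Real.exp_le_exp]
    have hs0 : 0 ≤ ∑ i, X i ω := Finset.sum_nonneg fun i _ => (hXb i ω).1
    have hsm : ∑ i, X i ω ≤ m := by
      calc ∑ i, X i ω ≤ ∑ _i : Fin m, (1:ℝ) :=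
            Finset.sum_le_sum fun i _ => (hXb i ω).2
        _ = m := by simp
    calc u * ∑ i, X i ω ≤ |u * ∑ i, X i ω| := le_abs_self _
      _ = |u| * |∑ i, X i ω| := abs_mul _ _
      _ ≤ |u| * m := by
          refine mul_le_mul_of_nonneg_left ?_ (abs_nonneg u)
          rwa [abs_of_nonneg hs0]
  have hlab : |lam| ≤ 1 := by rw [abs_of_pos hl0]; exact hl1
  have hlab' : |(-lam)| ≤ 1 := by rwa [abs_neg]
  -- upper tail
  have hup : (μ {ω | ↑m * p + t₀ ≤ ∑ i, X i ω}).toReal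
      ≤ Real.exp (↑m * p * lam ^ 2 - lam * t₀) := by
    have h := measure_ge_le_exp_mul_mgf (μ := μ) (X := fun ω => ∑ i, X i ω)
      (↑m * p + t₀) hl0.le (hSint lam)
    refine h.trans ?_
    calc Real.exp (-lam * (↑m * p + t₀)) * mgf (fun ω => ∑ i, X i ω) μ lam
        ≤ Real.exp (-lam * (↑m * p + t₀)) * Real.exp (↑m * p * (Real.exp lam - 1)) := by
          exact mul_le_mul_of_nonneg_left (hmgf_sum lam) (Real.exp_pos _).le
      _ = Real.exp (↑m * p * (Real.exp lam - 1) - lam * (↑m * p + t₀)) := by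
          rw [← Real.exp_add]; ring_nf
      _ ≤ Real.exp (↑m * p * lam ^ 2 - lam * t₀) := by
          rw [Real.exp_le_exp]
          have := exp_quad hlab
          nlinarith [hmp0]
  -- lower tail
  have hlo : (μ {ω | ∑ i, X i ω ≤ ↑m * p - t₀}).toReal
      ≤ Real.exp (↑m * p * lam ^ 2 - lam * t₀) := by
    have h := measure_le_le_exp_mul_mgf (μ := μ) (X := fun ω => ∑ i, X i ω)
      (↑m * p - t₀) (neg_nonpos.mpr hl0.le) (hSint (-lam))
    refine h.trans ?_
    calc Real.exp (-(-lam) * (↑m * p - t₀)) * mgf (fun ω => ∑ i, X i ω) μ (-lam)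
        ≤ Real.exp (-(-lam) * (↑m * p - t₀)) * Real.exp (↑m * p * (Real.exp (-lam) - 1)) := by
          exact mul_le_mul_of_nonneg_left (hmgf_sum (-lam)) (Real.exp_pos _).le
      _ = Real.exp (↑m * p * (Real.exp (-lam) - 1) + lam * (↑m * p - t₀)) := by
          rw [← Real.exp_add]; ring_nf
      _ ≤ Real.exp (↑m * p * lam ^ 2 - lam * t₀) := by
          rw [Real.exp_le_exp]
          have := exp_quad hlab'
          rw [neg_pow] at this
          nlinarith [hmp0]
  linarith


/-- Threshold (Heaviside) nonlinearity. -/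
noncomputable def thr (t : ℝ) : ℝ := if 0 < t then 1 else 0

/-- Standard Gaussian measure on `ℝⁿ`. -/
noncomputable def stdGaussian (n : ℕ) : Measure (Fin n → ℝ) :=
  Measure.pi fun _ => gaussianReal 0 1

lemma thr_nonneg (t : ℝ) : 0 ≤ thr t := by unfold thr; split <;> norm_num
lemma thr_le_one (t : ℝ) : thr t ≤ 1 := by unfold thr; split <;> norm_num
lemma thr01 (t : ℝ) : thr t = 0 ∨ thr t = 1 := by unfold thr; split <;> simp
lemma measurable_thr : Measurable thr := by
  unfold thr
  exact Measurable.ite measurableSet_Ioi measurable_const measurable_const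

instance stdGaussian_isProb (n : ℕ) : IsProbabilityMeasure (stdGaussian n) := by
  unfold _root_.stdGaussian; infer_instance

set_option maxHeartbeats 1000000 in
/-- Deviation lemma: for i.i.d. Gaussian rows `g₁,…,g_m`, the inner product
`⟨Φ(x),Φ(x')⟩ = ∑ᵢ φ(⟨gᵢ,x⟩-b) φ(⟨gᵢ,x'⟩-b)` concentrates around `m p`. -/
theorem stmt14 :
    ∃ C b₀ : ℝ, 0 < C ∧ 0 < b₀ ∧
      ∀ (n m : ℕ) (x x' : Fin n → ℝ) (b : ℝ) (p : ℝ) (N : ℝ),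
        Real.sqrt (∑ i, x i ^ 2) ≤ 2 → Real.sqrt (∑ i, x' i ^ 2) ≤ 2 →
        b₀ ≤ b → 2 ≤ N →
        p = (∫ g, thr ((∑ i, g i * x i) - b) * thr ((∑ i, g i * x' i) - b)
              ∂(stdGaussian n)) →
        ENNReal.ofReal (1 - 2 * m / N ^ 5) ≤
          (Measure.pi fun _ : Fin m => stdGaussian n)
            {G | |(∑ i, thr ((∑ j, G i j * x j) - b) * thr ((∑ j, G i j * x' j) - b))
                    - m * p|
                  ≤ C * (Real.sqrt (m * p) * Real.log N + (Real.log N) ^ 2)} := by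
  refine ⟨32, 1, by norm_num, by norm_num, ?_⟩
  intro n m x x' b p N hx hx' hb hN hp
  set ν := stdGaussian n with hν
  set μ := (Measure.pi fun _ : Fin m => stdGaussian n) with hμ
  haveI : IsProbabilityMeasure μ := by rw [hμ]; infer_instance
  set f : (Fin n → ℝ) → ℝ :=
    fun g => thr ((∑ i, g i * x i) - b) * thr ((∑ i, g i * x' i) - b) with hf
  have hf01 : ∀ g, f g = 0 ∨ f g = 1 := by
    intro g
    rcases thr01 ((∑ i, g i * x i) - b) with h | h <;>
      rcases thr01 ((∑ i, g i * x' i) - b) with h' | h' <;> simp [hf, h, h']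
  have hfb : ∀ g, 0 ≤ f g ∧ f g ≤ 1 := by
    intro g; rcases hf01 g with h | h <;> rw [h] <;> norm_num
  have hfmeas : Measurable f := by
    apply Measurable.mul
    · exact measurable_thr.comp
        ((Finset.measurable_sum Finset.univ fun i _ =>
          (by fun_prop : Measurable fun g : Fin n → ℝ => g i * x i)).sub measurable_const)
    · exact measurable_thr.comp
        ((Finset.measurable_sum Finset.univ fun i _ =>
          (by fun_prop : Measurable fun g : Fin n → ℝ => g i * x' i)).sub measurable_const)
  have hfint : Integrable f ν := by
    refine (integrable_const (1:ℝ)).mono' hfmeas.aestronglyMeasurable ?_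
    filter_upwards with g
    rw [Real.norm_eq_abs, abs_of_nonneg (hfb g).1]; exact (hfb g).2
  have hp0 : 0 ≤ p := by
    rw [hp]; exact integral_nonneg fun g => mul_nonneg (thr_nonneg _) (thr_nonneg _)
  have hp1 : p ≤ 1 := by
    rw [hp]
    calc (∫ g, thr ((∑ i, g i * x i) - b) * thr ((∑ i, g i * x' i) - b) ∂ν)
        ≤ ∫ _g, (1:ℝ) ∂ν := integral_mono hfint (integrable_const 1) fun g => (hfb g).2
      _ = 1 := by simp
  have hN0 : (0:ℝ) < N := lt_of_lt_of_le (by norm_num) hN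
  have hlog : (1:ℝ)/2 ≤ Real.log N := by
    have h2 : (0.6931471803 : ℝ) < Real.log 2 := Real.log_two_gt_d9
    have := Real.log_le_log (by norm_num : (0:ℝ) < 2) hN
    linarith
  have hlogpos : 0 < Real.log N := lt_of_lt_of_le (by norm_num) hlog
  set L := Real.log N with hL
  set t₀ : ℝ := 32 * (Real.sqrt (↑m * p) * L + L ^ 2) with ht₀def
  have hsq : 0 ≤ Real.sqrt (↑m * p) * L := mul_nonneg (Real.sqrt_nonneg _) hlogpos.le
  have ht₀ : 0 < t₀ := by positivity
  have hN5 : (0:ℝ) < N ^ 5 := by positivity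
  rcases Nat.eq_zero_or_pos m with hm | hm
  · subst hm
    have hset : {G : Fin 0 → Fin n → ℝ |
        |(∑ i, thr ((∑ j, G i j * x j) - b) * thr ((∑ j, G i j * x' j) - b)) - ↑(0:ℕ) * p|
          ≤ 32 * (Real.sqrt (↑(0:ℕ) * p) * Real.log N + (Real.log N) ^ 2)} = Set.univ := by
      ext G
      simp only [Set.mem_setOf_eq, Set.mem_univ, iff_true, Finset.univ_eq_empty,
        Finset.sum_empty, Nat.cast_zero, zero_mul, sub_zero, abs_zero]
      positivity
    rw [hset]
    simp only [measure_univ, Nat.cast_zero]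
    rw [show (1 : ℝ) - 2 * 0 / N ^ 5 = 1 by ring]
    simp
  -- main case m ≥ 1
  set X : Fin m → (Fin m → Fin n → ℝ) → ℝ := fun i G => f (G i) with hX
  have hind : iIndepFun X μ := by
    have := (iIndep_eval m ν).comp (fun _ => f) (fun _ => hfmeas)
    exact this
  have hXmeas : ∀ i, Measurable (X i) := fun i => hfmeas.comp (measurable_pi_apply i)
  have hX01 : ∀ i G, X i G = 0 ∨ X i G = 1 := fun i G => hf01 (G i)
  have hmean : ∀ i, ∫ G, X i G ∂μ = p := by
    intro i
    have hmap : μ.map (fun G : Fin m → Fin n → ℝ => G i) = ν := pi_map_eval ν i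
    rw [hX]
    have : ∫ G, f (G i) ∂μ = ∫ g, f g ∂(μ.map (fun G : Fin m → Fin n → ℝ => G i)) := by
      rw [integral_map (measurable_pi_apply i).aemeasurable
        (by rw [hmap]; exact hfmeas.aestronglyMeasurable)]
    rw [this, hmap, hp, hν]
  -- choose lambda and get tail bound
  have key : ∃ lam : ℝ, 0 < lam ∧ lam ≤ 1 ∧ ↑m * p * lam ^ 2 - lam * t₀ ≤ -(5 * L) := by
    rcases le_or_gt t₀ (2 * (↑m * p)) with hc | hc
    · have hmp : (0:ℝ) < ↑m * p := by nlinarith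
      refine ⟨t₀ / (2 * (↑m * p)), by positivity, by
        rw [div_le_one (by positivity)]; linarith, ?_⟩
      have hval : ↑m * p * (t₀ / (2 * (↑m * p))) ^ 2 - (t₀ / (2 * (↑m * p))) * t₀
          = -(t₀ ^ 2 / (4 * (↑m * p))) := by
        field_simp; ring
      rw [hval]
      have hts : 32 * (Real.sqrt (↑m * p) * L) ≤ t₀ := by
        rw [ht₀def]; nlinarith [sq_nonneg L]
      have hsqsq : Real.sqrt (↑m * p) ^ 2 = ↑m * p := Real.sq_sqrt (by positivity)
      have ht2 : 1024 * (↑m * p) * L ^ 2 ≤ t₀ ^ 2 := by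
        have h1 : 0 ≤ 32 * (Real.sqrt (↑m * p) * L) := by positivity
        nlinarith [hts, hsqsq]
      rw [neg_le_neg_iff, le_div_iff₀ (by positivity)]
      have h1024 : (0:ℝ) ≤ 1024 * L - 20 := by linarith
      nlinarith [mul_nonneg (mul_nonneg hmp.le hlogpos.le) h1024, ht2]
    · refine ⟨1, one_pos, le_refl 1, ?_⟩
      have h16 : 32 * L ^ 2 ≤ t₀ := by rw [ht₀def]; nlinarith
      nlinarith [hlog, hlogpos, mul_nonneg (Nat.cast_nonneg m : (0:ℝ) ≤ m) hp0]
  obtain ⟨lam, hl0, hl1, hexp⟩ := key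
  have htails := bernoulli_tails hind hXmeas hX01 hmean hp0 hp1 hl0 hl1 (t₀ := t₀)
  have htail2 : (μ {G | ↑m * p + t₀ ≤ ∑ i, X i G}).toReal
      + (μ {G | ∑ i, X i G ≤ ↑m * p - t₀}).toReal ≤ 2 / N ^ 5 := by
    refine htails.trans ?_
    have : Real.exp (↑m * p * lam ^ 2 - lam * t₀) ≤ Real.exp (-(5 * L)) :=
      Real.exp_le_exp.mpr hexp
    have hexpN : Real.exp (-(5 * L)) = (N ^ 5)⁻¹ := by
      rw [← Real.exp_log hN0] at *
      rw [Real.exp_neg, ← Real.exp_nat_mul]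
      norm_num [hL]
    rw [div_eq_mul_inv, ← hexpN]
    linarith
  -- assemble
  set E : Set (Fin m → Fin n → ℝ) := {G |
      |(∑ i, thr ((∑ j, G i j * x j) - b) * thr ((∑ j, G i j * x' j) - b)) - ↑m * p|
        ≤ 32 * (Real.sqrt (↑m * p) * Real.log N + (Real.log N) ^ 2)} with hE
  have hSmeas : Measurable fun G : Fin m → Fin n → ℝ => ∑ i, X i G :=
    Finset.measurable_sum Finset.univ fun i _ => hXmeas i
  have hEmeas : MeasurableSet E := by
    have : E = (fun G => |(∑ i, X i G) - ↑m * p|) ⁻¹' (Set.Iic t₀) := by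
      ext G; rfl
    rw [this]
    exact ((hSmeas.sub_const _).abs) measurableSet_Iic
  have hcompl : Eᶜ ⊆ {G | ↑m * p + t₀ ≤ ∑ i, X i G} ∪ {G | ∑ i, X i G ≤ ↑m * p - t₀} := by
    intro G hG
    simp only [hE, Set.mem_compl_iff, Set.mem_setOf_eq, not_le] at hG
    rcases lt_or_ge ((∑ i, X i G) - ↑m * p) 0 with h | h
    · right
      have : t₀ < -((∑ i, X i G) - ↑m * p) := by
        rwa [abs_of_neg h] at hG
      simp only [Set.mem_setOf_eq]; linarith
    · left
      have : t₀ < (∑ i, X i G) - ↑m * p := by rwa [abs_of_nonneg h] at hG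
      simp only [Set.mem_setOf_eq]; linarith
  have hmA : μ {G | ↑m * p + t₀ ≤ ∑ i, X i G} ≤ ENNReal.ofReal ((μ {G | ↑m * p + t₀ ≤ ∑ i, X i G}).toReal) := by
    rw [ENNReal.ofReal_toReal (measure_ne_top μ _)]
  have hmB : μ {G | ∑ i, X i G ≤ ↑m * p - t₀} ≤ ENNReal.ofReal ((μ {G | ∑ i, X i G ≤ ↑m * p - t₀}).toReal) := by
    rw [ENNReal.ofReal_toReal (measure_ne_top μ _)]
  have hcb : μ Eᶜ ≤ ENNReal.ofReal (2 / N ^ 5) := by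
    calc μ Eᶜ ≤ μ ({G | ↑m * p + t₀ ≤ ∑ i, X i G} ∪ {G | ∑ i, X i G ≤ ↑m * p - t₀}) :=
          measure_mono hcompl
      _ ≤ μ {G | ↑m * p + t₀ ≤ ∑ i, X i G} + μ {G | ∑ i, X i G ≤ ↑m * p - t₀} :=
          measure_union_le _ _
      _ ≤ ENNReal.ofReal ((μ {G | ↑m * p + t₀ ≤ ∑ i, X i G}).toReal)
            + ENNReal.ofReal ((μ {G | ∑ i, X i G ≤ ↑m * p - t₀}).toReal) :=
          add_le_add hmA hmB
      _ = ENNReal.ofReal ((μ {G | ↑m * p + t₀ ≤ ∑ i, X i G}).toReal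
            + (μ {G | ∑ i, X i G ≤ ↑m * p - t₀}).toReal) :=
          (ENNReal.ofReal_add ENNReal.toReal_nonneg ENNReal.toReal_nonneg).symm
      _ ≤ ENNReal.ofReal (2 / N ^ 5) := ENNReal.ofReal_le_ofReal htail2
  have h2m : (2:ℝ) ≤ 2 * ↑m := by
    have h1 : (1:ℝ) ≤ ↑m := by exact_mod_cast hm
    linarith
  have hEcompl : μ E = 1 - μ Eᶜ := by
    have h := prob_compl_eq_one_sub (μ := μ) hEmeas.compl
    rwa [compl_compl] at h
  calc ENNReal.ofReal (1 - 2 * ↑m / N ^ 5)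
      ≤ ENNReal.ofReal (1 - 2 / N ^ 5) := by
        refine ENNReal.ofReal_le_ofReal ?_
        have : (2:ℝ) / N ^ 5 ≤ 2 * ↑m / N ^ 5 := by gcongr
        linarith
    _ = 1 - ENNReal.ofReal (2 / N ^ 5) := by
        rw [ENNReal.ofReal_sub _ (by positivity : (0:ℝ) ≤ 2 / N ^ 5), ENNReal.ofReal_one]
    _ ≤ 1 - μ Eᶜ := tsub_le_tsub_left hcb 1
    _ = μ E := hEcompl.symm
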